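/- For every non-elliptic self-embedding g of a tree T and every vertex v, the sequence (g^i(v)) for i in ℕ converges to the direction g⁺ of g. -/

import Mathlib

open SimpleGraph

variable {V : Type*}

/-- `g` is a self-embedding of `G`: injective and adjacency-preserving. -/
def IsEmb (G : SimpleGraph V) (g : V → V) : Prop :=
  Function.Injective g ∧ ∀ u v : V, G.Adj u v → G.Adj (g u) (g v)

/-- A ray in `G`: a one-way infinite path. -/
structure GRay (G : SimpleGraph V) where
  f : ℕ → V
  inj : Function.Injective f
  adj : ∀ n, G.Adj (f n) (f (n + 1))

/-- Two rays are equivalent (lie in the same end): for every vertex `v` they have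
tails avoiding `v` lying in the same component of `G − v`. -/
def RayEquiv (G : SimpleGraph V) (R S : GRay G) : Prop :=
  ∀ v : V, ∃ m n : ℕ, (∀ i, m ≤ i → R.f i ≠ v) ∧ (∀ j, n ≤ j → S.f j ≠ v) ∧
    ∃ w : G.Walk (R.f m) (S.f n), v ∉ w.support

/-- `g` fixes the end represented by the ray `R`: the image ray is equivalent to `R`. -/
def FixesEnd (G : SimpleGraph V) (g : V → V) (R : GRay G) : Prop :=
  ∃ S : GRay G, (∀ n, S.f n = g (R.f n)) ∧ RayEquiv G S R

def FixesVertex (g : V → V) : Prop := ∃ v, g v = v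

/-- `g` fixes an edge setwise (possibly swapping its endpoints). -/
def FixesEdge (G : SimpleGraph V) (g : V → V) : Prop :=
  ∃ u v : V, G.Adj u v ∧ ((g u = u ∧ g v = v) ∨ (g u = v ∧ g v = u))

/-- `g` fixes setwise a non-empty finite subtree of `G`. -/
def FixesFiniteSubtree (G : SimpleGraph V) (g : V → V) : Prop :=
  ∃ S : Set V, S.Nonempty ∧ S.Finite ∧ (G.induce S).Connected ∧ g '' S = S

/-- `R` is a ray with `g(R) ⊆ R`; for non-elliptic `g` its end is the direction `g⁺`. -/
def DirectionRay (G : SimpleGraph V) (g : V → V) (R : GRay G) : Prop :=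
  ∀ n, ∃ m, g (R.f n) = R.f m

/-- `w` lies in the component of `G − x` containing the end of `R`. -/
def InComp (G : SimpleGraph V) (x : V) (R : GRay G) (w : V) : Prop :=
  ∃ m, (∀ i, m ≤ i → R.f i ≠ x) ∧ ∃ p : G.Walk w (R.f m), x ∉ p.support

/-- A sequence of vertices converges to the end represented by `R`. -/
def ConvergesTo (G : SimpleGraph V) (x : ℕ → V) (R : GRay G) : Prop :=
  ∀ v : V, ∃ N : ℕ, ∀ n, N ≤ n → InComp G v R (x n)

/-- `M` is a submonoid of `Emb(G)`. -/
def IsEmbMonoid (G : SimpleGraph V) (M : Set (V → V)) : Prop :=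
  (∀ g ∈ M, IsEmb G g) ∧ (id ∈ M) ∧ ∀ g ∈ M, ∀ h ∈ M, (g ∘ h) ∈ M

/-- The end of `R` is an accumulation point of the orbit of `v0` under `M`:
every basic neighbourhood of the end of `R` meets the orbit. -/
def InLimitSet (G : SimpleGraph V) (M : Set (V → V)) (v0 : V) (R : GRay G) : Prop :=
  ∀ x : V, ∃ g ∈ M, InComp G x R (g v0)

/-- A self-embedding is elliptic if it fixes a non-empty finite subtree. -/
def Elliptic (G : SimpleGraph V) (g : V → V) : Prop := FixesFiniteSubtree G g

lemma IsEmb.iterate {G : SimpleGraph V} {g : V → V} (hg : IsEmb G g) (n : ℕ) :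
    IsEmb G (g^[n]) := by
  induction n with
  | zero => exact ⟨fun a b h => h, fun u v h => h⟩
  | succ n ih =>
    rw [Function.iterate_succ']
    exact ⟨hg.1.comp ih.1, fun u v h => hg.2 _ _ (ih.2 _ _ h)⟩

def IsEmb.hom {G : SimpleGraph V} {g : V → V} (hg : IsEmb G g) : G →g G :=
  ⟨g, fun {a b} h => hg.2 a b h⟩

lemma elliptic_of_periodic {G : SimpleGraph V} (hT : G.IsTree) {g : V → V} (hg : IsEmb G g)
    {w : V} {k : ℕ} (hk : 1 ≤ k) (hw : g^[k] w = w) : Elliptic G g := by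
  classical
  obtain ⟨q⟩ : Nonempty (G.Path w (g w)) :=
    ⟨((hT.isConnected.preconnected w (g w)).some).toPath⟩
  set q0 : G.Walk w (g w) := (q : G.Walk w (g w)) with hq0
  -- mapped walks
  let wj : ∀ j : ℕ, G.Walk (g^[j] w) (g^[j] (g w)) := fun j => q0.map (hg.iterate j).hom
  have hwjsupp : ∀ j, (wj j).support = q0.support.map (g^[j]) := fun j =>
    Walk.support_map _ _
  -- key: g^[k] maps the support of q0 onto itself
  have e2 : g^[k] (g w) = g w := by
    rw [← Function.iterate_succ_apply, Function.iterate_succ_apply', hw]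
  have hkey : q0.support.map (g^[k]) = q0.support := by
    have hp' : ((wj k).copy hw e2).IsPath := by
      rw [Walk.isPath_copy]
      exact Walk.map_isPath_of_injective (hg.iterate k).1 q.2
    have hq' : (⟨(wj k).copy hw e2, hp'⟩ : G.Path w (g w)) = q :=
      hT.IsAcyclic.path_unique _ q
    have := congrArg (fun p : G.Path w (g w) => (p : G.Walk w (g w)).support) hq'
    simpa [Walk.support_copy, hwjsupp] using this
  -- the subgraph chain
  let H : ℕ → G.Subgraph := fun j =>
    Nat.rec ((wj 0).toSubgraph) (fun j h => h ⊔ (wj (j + 1)).toSubgraph) j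
  have hHsucc : ∀ j, H (j + 1) = H j ⊔ (wj (j + 1)).toSubgraph := fun j => rfl
  have hH0 : H 0 = (wj 0).toSubgraph := rfl
  have hHverts : ∀ j, (H j).verts = {u | ∃ i ≤ j, ∃ t ∈ q0.support, g^[i] t = u} := by
    intro j
    induction j with
    | zero =>
      rw [hH0]
      ext u
      simp only [Walk.verts_toSubgraph, hwjsupp, List.mem_map, Set.mem_setOf_eq]
      constructor
      · rintro ⟨t, ht, rfl⟩; exact ⟨0, le_rfl, t, ht, rfl⟩
      · rintro ⟨i, hi, t, ht, rfl⟩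
        have : i = 0 := Nat.le_zero.mp hi
        subst this; exact ⟨t, ht, rfl⟩
    | succ j ih =>
      rw [hHsucc, Subgraph.verts_sup, ih]
      ext u
      simp only [Set.mem_union, Set.mem_setOf_eq, Walk.verts_toSubgraph, hwjsupp,
        List.mem_map]
      constructor
      · rintro (⟨i, hi, t, ht, rfl⟩ | ⟨t, ht, rfl⟩)
        · exact ⟨i, Nat.le_succ_of_le hi, t, ht, rfl⟩
        · exact ⟨j + 1, le_rfl, t, ht, rfl⟩
      · rintro ⟨i, hi, t, ht, rfl⟩
        by_cases h : i ≤ j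
        · exact Or.inl ⟨i, h, t, ht, rfl⟩
        · have : i = j + 1 := by omega
          subst this; exact Or.inr ⟨t, ht, rfl⟩
  have hend : ∀ j, g^[j + 1] w ∈ (H j).verts := by
    intro j
    rw [hHverts]
    exact ⟨j, le_rfl, g w, Walk.end_mem_support q0, Function.iterate_succ_apply g j w ▸ rfl⟩
  have hHconn : ∀ j, (H j).Connected := by
    intro j
    induction j with
    | zero => rw [hH0]; exact Walk.toSubgraph_connected _
    | succ j ih =>
      rw [hHsucc]
      refine Subgraph.connected_sup ih.preconnected (Walk.toSubgraph_connected _).preconnected ⟨g^[j + 1] w, ?_⟩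
      rw [Subgraph.verts_inf]
      exact ⟨hend j, Walk.start_mem_verts_toSubgraph _⟩
  have hHfin : ∀ j, (H j).verts.Finite := by
    intro j
    induction j with
    | zero =>
      rw [hH0, Walk.verts_toSubgraph]
      exact (wj 0).support.finite_toSet
    | succ j ih =>
      rw [hHsucc, Subgraph.verts_sup]
      exact ih.union (by rw [Walk.verts_toSubgraph]; exact (wj (j+1)).support.finite_toSet)
  -- assemble
  refine ⟨(H (k - 1)).verts, ?_, hHfin _, (hHconn _).induce_verts, ?_⟩
  · exact ⟨w, by rw [hHverts]; exact ⟨0, Nat.zero_le _, w, Walk.start_mem_support q0, rfl⟩⟩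
  · rw [hHverts]
    ext u
    constructor
    · rintro ⟨y, ⟨i, hik, t, ht, rfl⟩, rfl⟩
      have hgi : g (g^[i] t) = g^[i + 1] t := (Function.iterate_succ_apply' g i t).symm
      rcases Nat.lt_or_ge (i + 1) k with h | h
      · exact ⟨i + 1, by omega, t, ht, hgi.symm⟩
      · have hik' : i + 1 = k := by omega
        refine ⟨0, Nat.zero_le _, g^[k] t, ?_, ?_⟩
        · rw [← hkey]; exact List.mem_map_of_mem ht
        · simp only [Function.iterate_zero, id_eq]
          rw [hgi, hik']
    · rintro ⟨i, hik, t, ht, rfl⟩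
      rcases i with _ | i
      · -- i = 0 : t itself; write t = g^[k] s
        simp only [Function.iterate_zero, id_eq]
        have : t ∈ q0.support.map (g^[k]) := by rw [hkey]; exact ht
        obtain ⟨s, hs, rfl⟩ := List.mem_map.mp this
        refine ⟨g^[k - 1] s, ⟨k - 1, le_rfl, s, hs, rfl⟩, ?_⟩
        rw [← Function.iterate_succ_apply' g (k - 1) s]
        congr 1
        omega
      · exact ⟨g^[i] t, ⟨i, by omega, t, ht, rfl⟩, (Function.iterate_succ_apply' g i t).symm⟩

theorem stmt10 (G : SimpleGraph V) (hT : G.IsTree) (g : V → V) (hg : IsEmb G g)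
    (hne : ¬ Elliptic G g) (R : GRay G) (hR : DirectionRay G g R) (v : V) :
    ConvergesTo G (fun i => g^[i] v) R := by
  classical
  intro x
  -- no vertex is periodic under g
  have hper : ∀ (u : V) (i j : ℕ), i < j → g^[i] u = g^[j] u → False := by
    intro u i j hij hiju
    have h1 : g^[j] u = g^[i] (g^[j - i] u) := by
      rw [← Function.iterate_add_apply]; congr 1; omega
    have h2 : g^[j - i] u = u := ((hg.iterate i).1 (h1 ▸ hiju).symm)
    exact hne (elliptic_of_periodic hT hg (by omega : 1 ≤ j - i) h2)
  -- the index function along the ray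
  have haex : ∀ i : ℕ, ∃ m, g^[i] (R.f 0) = R.f m := by
    intro i
    induction i with
    | zero => exact ⟨0, rfl⟩
    | succ i ih =>
      obtain ⟨m, hm⟩ := ih
      obtain ⟨m', hm'⟩ := hR m
      exact ⟨m', by rw [Function.iterate_succ_apply', hm, hm']⟩
  choose a haa using haex
  have hainj : Function.Injective a := by
    intro i j hij
    have h : g^[i] (R.f 0) = g^[j] (R.f 0) := by rw [haa, haa, hij]
    rcases lt_trichotomy i j with h' | h' | h'
    · exact absurd h (fun h => hper _ i j h' h)
    · exact h'
    · exact absurd h.symm (fun h => hper _ j i h' h)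
  -- tail of the ray avoiding x
  obtain ⟨m0, hm0⟩ : ∃ m0, ∀ j, m0 ≤ j → R.f j ≠ x := by
    by_cases h : ∃ i, R.f i = x
    · obtain ⟨i0, hi0⟩ := h
      refine ⟨i0 + 1, fun j hj hjx => ?_⟩
      have := R.inj (hjx.trans hi0.symm)
      omega
    · exact ⟨0, fun j _ hjx => h ⟨j, hjx⟩⟩
  -- a walk from v to the ray
  set p : G.Walk v (R.f 0) := (hT.isConnected.preconnected v (R.f 0)).some with hp
  -- the set of bad indices is finite
  have hB1 : {i : ℕ | a i < m0}.Finite :=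
    Set.Finite.preimage (Set.injOn_of_injective hainj) (Set.finite_Iio m0)
  have hB2 : {i : ℕ | ∃ t ∈ p.support, g^[i] t = x}.Finite := by
    have : {i : ℕ | ∃ t ∈ p.support, g^[i] t = x} ⊆
        ⋃ t ∈ {t | t ∈ p.support}, {i : ℕ | g^[i] t = x} := by
      rintro i ⟨t, ht, hti⟩
      exact Set.mem_biUnion ht hti
    refine Set.Finite.subset (Set.Finite.biUnion p.support.finite_toSet
      (fun t _ => Set.Subsingleton.finite ?_)) this
    intro i hi j hj
    rcases lt_trichotomy i j with h' | h' | h'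
    · exact absurd (hi.trans hj.symm : g^[i] t = g^[j] t) (fun h => hper _ i j h' h)
    · exact h'
    · exact absurd (hj.trans hi.symm : g^[j] t = g^[i] t) (fun h => hper _ j i h' h)
  obtain ⟨N, hN⟩ := (hB1.union hB2).bddAbove
  refine ⟨N + 1, fun n hn => ?_⟩
  have hnB : ¬ (a n < m0 ∨ ∃ t ∈ p.support, g^[n] t = x) := by
    intro h
    have : n ∈ {i : ℕ | a i < m0} ∪ {i : ℕ | ∃ t ∈ p.support, g^[i] t = x} := h
    have := hN this
    omega
  push_neg at hnB
  obtain ⟨ham, hxt⟩ := hnB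
  refine ⟨a n, fun j hj => hm0 j (le_trans (by omega) hj), ?_⟩
  refine ⟨(p.map (hg.iterate n).hom).copy rfl (haa n), ?_⟩
  intro hx
  erw [Walk.support_copy, Walk.support_map] at hx
  obtain ⟨t, ht, htx⟩ := List.mem_map.mp hx
  exact hxt t ht htx
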